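/- Let n ≥ 1 and 1 ≤ k ≤ n. Let f_1,…,f_m ∈ ℝ[x_1,…,x_n] be polynomials each of which belongs to the ℝ-subalgebra of ℝ[x_1,…,x_n] generated by the elementary symmetric polynomials e_1,…,e_k. If the real variety X = {x ∈ ℝ^n : f_1(x) = ⋯ = f_m(x) = 0} is nonempty, then there exists a point x ∈ X with at most k distinct coordinates (i.e. the set {x_1,…,x_n} has cardinality at most k). -/

import Mathlib

open MvPolynomial

/-- The `m`-th power sum as a function on `ℝⁿ`. -/
def psumFun (n m : ℕ) : (Fin n → ℝ) → ℝ := fun y => ∑ j, y j ^ m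

lemma psumFun_continuous (n m : ℕ) : Continuous (psumFun n m) :=
  continuous_finset_sum _ fun j _ => (continuous_apply j).pow m

lemma eval_psum_eq (n : ℕ) (y : Fin n → ℝ) (m : ℕ) :
    eval y (psum (Fin n) ℝ m) = psumFun n m y := by
  simp [MvPolynomial.psum, psumFun]

lemma psumFun_hasStrictFDerivAt (n m : ℕ) (y : Fin n → ℝ) :
    HasStrictFDerivAt (psumFun n m)
      (∑ j : Fin n, ((m : ℝ) * y j ^ (m - 1)) •
        (ContinuousLinearMap.proj j : (Fin n → ℝ) →L[ℝ] ℝ)) y := by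
  apply HasStrictFDerivAt.fun_sum
  intro j _
  have hproj : HasStrictFDerivAt (fun y : Fin n → ℝ => y j)
      (ContinuousLinearMap.proj j : (Fin n → ℝ) →L[ℝ] ℝ) y :=
    (ContinuousLinearMap.proj j : (Fin n → ℝ) →L[ℝ] ℝ).hasStrictFDerivAt
  exact (hasStrictDerivAt_pow m (y j)).comp_hasStrictFDerivAt y hproj

/-- Newton's identities transfer: equality of the first `k` power sums implies equality of the
first `k` elementary symmetric polynomials. -/
lemma esymm_eval_eq_of_psum {n k : ℕ} {x y : Fin n → ℝ}
    (hp : ∀ i, 1 ≤ i → i ≤ k → eval y (psum (Fin n) ℝ i) = eval x (psum (Fin n) ℝ i)) :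
    ∀ r, r ≤ k → eval y (esymm (Fin n) ℝ r) = eval x (esymm (Fin n) ℝ r) := by
  intro r
  induction r using Nat.strong_induction_on with
  | _ r ih =>
    intro hrk
    rcases Nat.eq_zero_or_pos r with rfl | hr
    · simp
    have h1 := congrArg (eval y) (mul_esymm_eq_sum (Fin n) ℝ r)
    have h2 := congrArg (eval x) (mul_esymm_eq_sum (Fin n) ℝ r)
    simp only [map_mul, map_natCast, map_pow, map_neg, map_one, map_sum] at h1 h2
    have hsum : ∑ a ∈ Finset.HasAntidiagonal.antidiagonal r with a.1 < r,
        (-1 : ℝ) ^ a.1 * eval y (esymm (Fin n) ℝ a.1) * eval y (psum (Fin n) ℝ a.2) =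
        ∑ a ∈ Finset.HasAntidiagonal.antidiagonal r with a.1 < r,
        (-1 : ℝ) ^ a.1 * eval x (esymm (Fin n) ℝ a.1) * eval x (psum (Fin n) ℝ a.2) := by
      refine Finset.sum_congr rfl fun a ha => ?_
      simp only [Finset.mem_filter, Finset.HasAntidiagonal.mem_antidiagonal] at ha
      rw [ih a.1 ha.2 (le_trans (le_of_lt ha.2) hrk), hp a.2 (by omega) (by omega)]
    have : (r : ℝ) * eval y (esymm (Fin n) ℝ r) = (r : ℝ) * eval x (esymm (Fin n) ℝ r) := by
      rw [h1, h2, hsum]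
    exact mul_left_cancel₀ (Nat.cast_ne_zero.2 hr.ne') this

lemma eval_eq_of_mem_adjoin {n k : ℕ} {x y : Fin n → ℝ}
    (he : ∀ i, 1 ≤ i → i ≤ k → eval y (esymm (Fin n) ℝ i) = eval x (esymm (Fin n) ℝ i))
    {p : MvPolynomial (Fin n) ℝ}
    (hp : p ∈ Algebra.adjoin ℝ
      {p : MvPolynomial (Fin n) ℝ | ∃ i, 1 ≤ i ∧ i ≤ k ∧ p = esymm (Fin n) ℝ i}) :
    eval y p = eval x p := by
  induction hp using Algebra.adjoin_induction with
  | mem p hp => obtain ⟨i, h1, h2, rfl⟩ := hp; exact he i h1 h2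
  | algebraMap r => simp [MvPolynomial.algebraMap_eq]
  | add p q _ _ ihp ihq => simp [ihp, ihq]
  | mul p q _ _ ihp ihq => simp [ihp, ihq]

/-- The key analytic step: any real point can be replaced by one with at most `k` distinct
coordinates having the same first `k` power sums. -/
lemma exists_point_psum_eq {n k : ℕ} (hk : 2 ≤ k) (x : Fin n → ℝ) :
    ∃ y : Fin n → ℝ, (∀ i, 1 ≤ i → i ≤ k → psumFun n i y = psumFun n i x) ∧
      (Set.range y).ncard ≤ k := by
  classical
  set V : Set (Fin n → ℝ) :=
    {y | ∀ i : Fin k, psumFun n ((i : ℕ) + 1) y = psumFun n ((i : ℕ) + 1) x} with hVdef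
  have hxV : x ∈ V := fun i => rfl
  have hVclosed : IsClosed V := by
    have : V = ⋂ i : Fin k, {y | psumFun n ((i : ℕ) + 1) y = psumFun n ((i : ℕ) + 1) x} := by
      ext y; simp [hVdef, Set.mem_iInter]
    rw [this]
    exact isClosed_iInter fun i => isClosed_eq (psumFun_continuous _ _) continuous_const
  have hVbdd : V ⊆ Metric.closedBall 0 (Real.sqrt (psumFun n 2 x)) := by
    intro y hy
    have h2 : psumFun n 2 y = psumFun n 2 x := by
      have := hy ⟨1, by omega⟩
      simpa using this
    rw [Metric.mem_closedBall, dist_zero_right,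
      pi_norm_le_iff_of_nonneg (Real.sqrt_nonneg _)]
    intro j
    have hle : y j ^ 2 ≤ psumFun n 2 x := by
      rw [← h2]
      exact Finset.single_le_sum (fun i _ => sq_nonneg (y i)) (Finset.mem_univ j)
    rw [Real.norm_eq_abs, ← Real.sqrt_sq_eq_abs]
    exact Real.sqrt_le_sqrt hle
  have hVcpt : IsCompact V :=
    (isCompact_closedBall _ _).of_isClosed_subset hVclosed hVbdd
  obtain ⟨y₀, hy₀V, hy₀max⟩ :=
    hVcpt.exists_isMaxOn ⟨x, hxV⟩ ((psumFun_continuous n (k + 1)).continuousOn)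
  have hsetEq : {y | ∀ i : Fin k, psumFun n ((i : ℕ) + 1) y = psumFun n ((i : ℕ) + 1) y₀} = V := by
    ext y
    constructor
    · intro h i; exact (h i).trans (hy₀V i)
    · intro h i; exact (h i).trans (hy₀V i).symm
  have hextr : IsLocalExtrOn (psumFun n (k + 1))
      {y | ∀ i : Fin k, psumFun n ((i : ℕ) + 1) y = psumFun n ((i : ℕ) + 1) y₀} y₀ := by
    rw [hsetEq]; exact hy₀max.localize.isExtr
  obtain ⟨Λ, Λ₀, hΛne, hΛ⟩ := hextr.exists_multipliers_of_hasStrictFDerivAt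
    (fun i : Fin k => psumFun_hasStrictFDerivAt n ((i : ℕ) + 1) y₀)
    (psumFun_hasStrictFDerivAt n (k + 1) y₀)
  -- the degree-≤-k polynomial killed by every coordinate of y₀
  set q : Polynomial ℝ :=
    (∑ i : Fin k, Polynomial.C (Λ i * (((i : ℕ) : ℝ) + 1)) * Polynomial.X ^ (i : ℕ)) +
      Polynomial.C (Λ₀ * ((k : ℝ) + 1)) * Polynomial.X ^ k with hqdef
  have hroot : ∀ j : Fin n, q.eval (y₀ j) = 0 := by
    intro j
    have h := congrFun (congrArg DFunLike.coe hΛ) (Pi.single j 1)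
    simp only [ContinuousLinearMap.add_apply, ContinuousLinearMap.sum_apply,
      ContinuousLinearMap.smul_apply, ContinuousLinearMap.coe_sum', Finset.sum_apply,
      ContinuousLinearMap.proj_apply, ContinuousLinearMap.zero_apply, smul_eq_mul,
      Pi.single_apply, mul_ite, mul_one, mul_zero, Finset.sum_ite_eq',
      Finset.mem_univ, if_true, Nat.add_sub_cancel] at h
    rw [hqdef]
    simp only [Polynomial.eval_add, Polynomial.eval_finset_sum, Polynomial.eval_mul,
      Polynomial.eval_C, Polynomial.eval_pow, Polynomial.eval_X]
    push_cast at h ⊢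
    linarith [h, Finset.sum_congr rfl (fun (i : Fin k) (_ : i ∈ Finset.univ) =>
      (by ring : Λ i * (((i : ℕ) : ℝ) + 1) * y₀ j ^ (i : ℕ) =
        Λ i * ((((i : ℕ) : ℝ) + 1) * y₀ j ^ (i : ℕ))))]
  have hqne : q ≠ 0 := by
    intro hq0
    apply hΛne
    have hΛ₀ : Λ₀ = 0 := by
      have := congrArg (fun p => Polynomial.coeff p k) hq0
      simp only [hqdef, Polynomial.coeff_add, Polynomial.finset_sum_coeff,
        Polynomial.coeff_C_mul, Polynomial.coeff_X_pow, Polynomial.coeff_zero] at this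
      rw [Finset.sum_eq_zero (fun i _ => by
        rw [if_neg (Nat.ne_of_gt i.isLt), mul_zero])] at this
      rw [if_pos trivial, mul_one, zero_add] at this
      have hk1 : (k : ℝ) + 1 ≠ 0 := by positivity
      exact (mul_eq_zero.1 this).resolve_right hk1
    have hΛz : Λ = 0 := by
      funext i
      have := congrArg (fun p => Polynomial.coeff p (i : ℕ)) hq0
      simp only [hqdef, Polynomial.coeff_add, Polynomial.finset_sum_coeff,
        Polynomial.coeff_C_mul, Polynomial.coeff_X_pow, Polynomial.coeff_zero] at this
      rw [Finset.sum_eq_single i (fun i' _ hne => by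
          rw [if_neg (fun h => hne (Fin.ext h.symm)), mul_zero]) (by simp),
        if_pos rfl, mul_one] at this
      rw [if_neg (Nat.ne_of_lt i.isLt), mul_zero, add_zero] at this
      have hi1 : ((i : ℕ) : ℝ) + 1 ≠ 0 := by positivity
      exact (mul_eq_zero.1 this).resolve_right hi1
    simp [hΛz, hΛ₀, Prod.ext_iff]
  have hdeg : q.natDegree ≤ k := by
    refine le_trans (Polynomial.natDegree_add_le _ _) (max_le ?_ ?_)
    · refine Polynomial.natDegree_sum_le_of_forall_le _ _ fun i _ => ?_
      exact le_trans (Polynomial.natDegree_C_mul_le _ _)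
        (by rw [Polynomial.natDegree_X_pow]; exact le_of_lt i.isLt)
    · exact le_trans (Polynomial.natDegree_C_mul_le _ _) (by simp)
  refine ⟨y₀, ?_, ?_⟩
  · intro i h1 h2
    have := hy₀V ⟨i - 1, by omega⟩
    have hi : ((⟨i - 1, by omega⟩ : Fin k) : ℕ) + 1 = i := by simp; omega
    rwa [hi] at this
  · have hsub : Set.range y₀ ⊆ (q.roots.toFinset : Set ℝ) := by
      rintro _ ⟨j, rfl⟩
      simp only [Finset.coe_sort_coe, Multiset.mem_toFinset, Finset.mem_coe]
      rw [Polynomial.mem_roots hqne]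
      exact hroot j
    calc (Set.range y₀).ncard ≤ (↑q.roots.toFinset : Set ℝ).ncard :=
          Set.ncard_le_ncard hsub (q.roots.toFinset : Finset ℝ).finite_toSet
      _ = q.roots.toFinset.card := Set.ncard_coe_finset _
      _ ≤ Multiset.card q.roots := Multiset.toFinset_card_le _
      _ ≤ q.natDegree := Polynomial.card_roots' q
      _ ≤ k := hdeg

/-- Timofte's degree principle for the symmetric group `Sₙ` (Theorem 1.1):
a nonempty real variety defined by polynomials in the first `k` elementary
symmetric polynomials contains a point with at most `k` distinct coordinates. -/
theorem timofte_degree_principle_esymm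
    (n : ℕ) (hn : 1 ≤ n) (k : ℕ) (hk1 : 1 ≤ k) (hkn : k ≤ n)
    (m : ℕ) (f : Fin m → MvPolynomial (Fin n) ℝ)
    (hf : ∀ j, f j ∈ Algebra.adjoin ℝ
      {p : MvPolynomial (Fin n) ℝ | ∃ i, 1 ≤ i ∧ i ≤ k ∧ p = esymm (Fin n) ℝ i})
    (hX : ∃ x : Fin n → ℝ, ∀ j, eval x (f j) = 0) :
    ∃ x : Fin n → ℝ, (∀ j, eval x (f j) = 0) ∧ (Set.range x).ncard ≤ k := by
  obtain ⟨x₀, hx₀⟩ := hX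
  haveI : Nonempty (Fin n) := ⟨⟨0, hn⟩⟩
  rcases eq_or_lt_of_le hk1 with hk1' | hk2
  · -- k = 1 : take the constant point with the same mean
    set y : Fin n → ℝ := fun _ => (∑ j, x₀ j) / n with hy
    have he : ∀ i, 1 ≤ i → i ≤ k → eval y (esymm (Fin n) ℝ i) = eval x₀ (esymm (Fin n) ℝ i) := by
      intro i h1 h2
      have : i = 1 := by omega
      subst this
      rw [esymm_one]
      simp only [map_sum, eval_X, hy]
      rw [Finset.sum_const, Finset.card_univ, Fintype.card_fin, nsmul_eq_mul,
        mul_div_cancel₀]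
      exact Nat.cast_ne_zero.2 (by omega)
    refine ⟨y, fun j => (eval_eq_of_mem_adjoin he (hf j)).trans (hx₀ j), ?_⟩
    rw [hy, Set.range_const, Set.ncard_singleton]
    exact hk1
  · -- k ≥ 2 : analytic argument
    obtain ⟨y, hyp, hycard⟩ := exists_point_psum_eq hk2 x₀
    have hp : ∀ i, 1 ≤ i → i ≤ k →
        eval y (psum (Fin n) ℝ i) = eval x₀ (psum (Fin n) ℝ i) := by
      intro i h1 h2
      rw [eval_psum_eq, eval_psum_eq]
      exact hyp i h1 h2
    have he := esymm_eval_eq_of_psum hp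
    exact ⟨y, fun j => (eval_eq_of_mem_adjoin
      (fun i h1 h2 => he i h2) (hf j)).trans (hx₀ j), hycard⟩
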